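/- The map φ : (0.54, 3^{-1/3}) × [0,1) → ℝ² defined by φ(x,k) = (x, y(x,k)) with y(x,k) = (1 + 3k(3^{1/3}x - 1))/(1 + k(3x³ - 1)) is injective, its image is exactly the set 𝔯' = {(x,y) : 0.54 < x < 3^{-1/3}, (3^{4/3}x - 2)/(3x³) < y ≤ 1}, and for each fixed x ∈ (0.54, 3^{-1/3}) one has ∂y/∂k(x,k) = (-3x³ + 3^{4/3}x - 2)/(1 + k(3x³ - 1))² < 0 for all k ∈ [0,1); hence φ is a diffeomorphism onto 𝔯'. -/

import Mathlib

noncomputable section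

/-- The function `y(x,k) = (1 + 3k(3^{1/3}x - 1))/(1 + k(3x³ - 1))` of the blow-up
coordinate change. -/
def yfun (x k : ℝ) : ℝ :=
  (1 + 3 * k * ((3:ℝ) ^ ((1:ℝ)/3) * x - 1)) / (1 + k * (3 * x ^ 3 - 1))

/-- The blow-up coordinate change `φ(x,k) = (x, y(x,k))`. -/
def φmap (p : ℝ × ℝ) : ℝ × ℝ := (p.1, yfun p.1 p.2)

/-- The rectangle `(0.54, 3^{-1/3}) × [0, 1)`. -/
def Rect : Set (ℝ × ℝ) :=
  Set.Ioo (0.54:ℝ) ((3:ℝ) ^ (-(1:ℝ)/3)) ×ˢ Set.Ico (0:ℝ) 1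

/-- The region `𝔯' = {(x,y) : 0.54 < x < 3^{-1/3}, (3^{4/3}x - 2)/(3x³) < y ≤ 1}`. -/
def R' : Set (ℝ × ℝ) :=
  {p | 0.54 < p.1 ∧ p.1 < (3:ℝ) ^ (-(1:ℝ)/3) ∧
       ((3:ℝ) ^ ((4:ℝ)/3) * p.1 - 2) / (3 * p.1 ^ 3) < p.2 ∧ p.2 ≤ 1}

lemma cbrt_cube : ((3:ℝ)^((1:ℝ)/3))^3 = 3 := by
  rw [← Real.rpow_natCast ((3:ℝ)^((1:ℝ)/3)) 3, ← Real.rpow_mul (by norm_num)]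
  norm_num

lemma cbrt_pos : 0 < (3:ℝ)^((1:ℝ)/3) := Real.rpow_pos_of_pos (by norm_num) _

lemma rpow43 : (3:ℝ)^((4:ℝ)/3) = 3 * (3:ℝ)^((1:ℝ)/3) := by
  rw [show ((4:ℝ)/3) = 1 + 1/3 by norm_num, Real.rpow_add (by norm_num), Real.rpow_one]

lemma cbrt_mul_inv : (3:ℝ)^((1:ℝ)/3) * (3:ℝ)^(-(1:ℝ)/3) = 1 := by
  rw [← Real.rpow_add (by norm_num)]; norm_num

/-- Basic facts about `x` in the interval, expressed with `c = 3^{1/3}`. -/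
lemma xfacts {x : ℝ} (hx : x ∈ Set.Ioo (0.54:ℝ) ((3:ℝ) ^ (-(1:ℝ)/3))) :
    0 < x ∧ (3:ℝ)^((1:ℝ)/3) * x < 1 ∧ 3 * x ^ 3 < 1 ∧
      0 < 3 * x ^ 3 - 3 * ((3:ℝ)^((1:ℝ)/3)) * x + 2 := by
  obtain ⟨hx1, hx2⟩ := hx
  set c := (3:ℝ)^((1:ℝ)/3) with hc
  have hc3 := cbrt_cube
  have hcp := cbrt_pos
  have hca := cbrt_mul_inv
  have hxpos : 0 < x := by linarith
  have ha_eq : (3:ℝ)^(-(1:ℝ)/3) = 1 / c := by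
    rw [eq_div_iff hcp.ne', mul_comm]; exact hca
  have hcx : c * x < 1 := by
    have := mul_lt_mul_of_pos_left hx2 hcp
    rw [hca] at this
    exact this
  have hx3 : 3 * x ^ 3 < 1 := by
    have hxa : x ^ 3 < (1/c) ^ 3 := by
      rw [← ha_eq]; exact pow_lt_pow_left₀ hx2 hxpos.le (by norm_num)
    have : (1/c:ℝ)^3 = 1/3 := by rw [div_pow, one_pow, hc3]
    rw [this] at hxa; linarith
  have hcx0 : 0 < c * x := mul_pos hcp hxpos
  have h1 : 0 < (c*x - 1)^2 := by nlinarith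
  have h2 : 0 < (c*x - 1)^2 * (c*x + 2) := mul_pos h1 (by linarith)
  have key : c^3 * (3*x^3 - 3*c*x + 2) = 3*((c*x-1)^2*(c*x+2)) + (c^3 - 3)*(2 - 3*c*x) := by
    ring
  have hg : 0 < 3 * x ^ 3 - 3 * c * x + 2 := by nlinarith [key, hc3, h2]
  exact ⟨hxpos, hcx, hx3, hg⟩

lemma den_pos {x k : ℝ} (hx3 : 3 * x ^ 3 < 1) (hxpos : 0 < x)
    (hk : k ∈ Set.Ico (0:ℝ) 1) : 0 < 1 + k * (3 * x ^ 3 - 1) := by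
  obtain ⟨hk0, hk1⟩ := hk
  nlinarith [mul_pos (by linarith : (0:ℝ) < 1 - k) (by linarith : (0:ℝ) < 1 - 3*x^3),
    pow_pos hxpos 3]

/-- The blow-up map `φ(x,k) = (x, y(x,k))` is injective on `(0.54, 3^{-1/3}) × [0,1)`,
its image is exactly `𝔯'`, and for each fixed `x` one has
`∂y/∂k = (-3x³ + 3^{4/3}x - 2)/(1 + k(3x³ - 1))² < 0` on `[0,1)`; hence it is a
diffeomorphism onto `𝔯'`. -/
theorem blow_up_coordinate_change :
    Set.InjOn φmap Rect ∧ φmap '' Rect = R' ∧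
    ∀ x ∈ Set.Ioo (0.54:ℝ) ((3:ℝ) ^ (-(1:ℝ)/3)), ∀ k ∈ Set.Ico (0:ℝ) 1,
      HasDerivAt (fun k' => yfun x k')
        ((-3 * x ^ 3 + (3:ℝ) ^ ((4:ℝ)/3) * x - 2) / (1 + k * (3 * x ^ 3 - 1)) ^ 2) k ∧
      (-3 * x ^ 3 + (3:ℝ) ^ ((4:ℝ)/3) * x - 2) / (1 + k * (3 * x ^ 3 - 1)) ^ 2 < 0 := by
  set c := (3:ℝ)^((1:ℝ)/3) with hc
  have hc3 := cbrt_cube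
  have hcp := cbrt_pos
  have h43 := rpow43
  refine ⟨?_, ?_, ?_⟩
  · -- injectivity
    rintro ⟨x₁, k₁⟩ ⟨hx₁, hk₁⟩ ⟨x₂, k₂⟩ ⟨hx₂, hk₂⟩ heq
    simp only [φmap, Prod.mk.injEq] at heq
    obtain ⟨hxeq, hyeq⟩ := heq
    subst hxeq
    obtain ⟨hxpos, hcx, hx3, hg⟩ := xfacts hx₁
    have hd1 := den_pos hx3 hxpos hk₁
    have hd2 := den_pos hx3 hxpos hk₂
    unfold yfun at hyeq
    rw [div_eq_div_iff hd1.ne' hd2.ne'] at hyeq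
    have hz : (k₂ - k₁) * (3 * x₁ ^ 3 - 3 * c * x₁ + 2) = 0 := by
      linear_combination hyeq
    have : k₂ - k₁ = 0 := by
      rcases mul_eq_zero.mp hz with h | h
      · exact h
      · exact absurd h (by linarith)
    have : k₁ = k₂ := by linarith
    simp [this]
  · -- image
    ext ⟨x, y⟩
    simp only [R', Set.mem_setOf_eq]
    constructor
    · rintro ⟨⟨x', k⟩, ⟨hx, hk⟩, heq⟩
      simp only [φmap, Prod.mk.injEq] at heq
      obtain ⟨rfl, rfl⟩ := heq
      obtain ⟨hxpos, hcx, hx3, hg⟩ := xfacts hx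
      have hd := den_pos hx3 hxpos hk
      obtain ⟨hk0, hk1⟩ := hk
      refine ⟨hx.1, hx.2, ?_, ?_⟩
      · rw [h43]
        simp only [yfun]
        rw [div_lt_div_iff₀ (by positivity) hd]
        nlinarith [mul_pos (by linarith : (0:ℝ) < 1 - k) hg]
      · simp only [yfun]
        rw [div_le_one hd]
        nlinarith [mul_nonneg hk0 hg.le]
    · rintro ⟨hx1, hx2, hy1, hy2⟩
      obtain ⟨hxpos, hcx, hx3, hg⟩ := xfacts ⟨hx1, hx2⟩
      rw [h43] at hy1
      set D := 3 * x ^ 3 * y - y + 3 - 3 * c * x with hD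
      have hmn : (0:ℝ) ≤ (1 - y) * (1 - 3 * x ^ 3) :=
        mul_nonneg (by linarith) (by linarith)
      have hDpos : 0 < D := by nlinarith [hmn]
      have hy1' : 3 * c * x - 2 < 3 * x ^ 3 * y := by
        rw [div_lt_iff₀ (by positivity)] at hy1
        linarith [hy1]
      set k := (1 - y) / D with hk
      have hk0 : 0 ≤ k := div_nonneg (by linarith) hDpos.le
      have hk1 : k < 1 := by
        rw [hk, div_lt_one hDpos]
        linarith
      refine ⟨(x, k), ⟨⟨hx1, hx2⟩, hk0, hk1⟩, ?_⟩
      simp only [φmap, Prod.mk.injEq, yfun]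
      refine ⟨trivial, ?_⟩
      have hden : 1 + k * (3 * x ^ 3 - 1) = (3 * x ^ 3 - 3 * c * x + 2) / D := by
        rw [hk]; field_simp; ring
      rw [hden, hk, div_eq_iff (by positivity)]
      field_simp
      ring
  · -- derivative
    intro x hx k hk
    obtain ⟨hxpos, hcx, hx3, hg⟩ := xfacts hx
    have hd := den_pos hx3 hxpos hk
    constructor
    · have hN : HasDerivAt (fun k' : ℝ => 1 + 3 * k' * (c * x - 1)) (3 * (c * x - 1)) k := by
        simpa using (((hasDerivAt_id k).const_mul (3:ℝ)).mul_const (c * x - 1)).const_add 1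
      have hDk : HasDerivAt (fun k' : ℝ => 1 + k' * (3 * x ^ 3 - 1)) (3 * x ^ 3 - 1) k := by
        simpa using ((hasDerivAt_id k).mul_const (3 * x ^ 3 - 1)).const_add 1
      have h := hN.div hDk hd.ne'
      have hval : (3 * (c * x - 1) * (1 + k * (3 * x ^ 3 - 1)) -
          (1 + 3 * k * (c * x - 1)) * (3 * x ^ 3 - 1)) / (1 + k * (3 * x ^ 3 - 1)) ^ 2
          = (-3 * x ^ 3 + (3:ℝ) ^ ((4:ℝ)/3) * x - 2) / (1 + k * (3 * x ^ 3 - 1)) ^ 2 := by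
        rw [h43]
        congr 1
        ring
      rw [← hval]
      exact h
    · apply div_neg_of_neg_of_pos
      · rw [h43]; nlinarith
      · positivity

end
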